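/- Suppose c'(0) > 0 and g(k) → ∞ as k → ∞. Then the Bellman equation p(s) = min_{0 ≤ t ≤ s, k ∈ ℕ, k ≥ 1} { c(s − t) + g(k) + (1+τ)·k·p(t/k) } has a unique solution p* in 𝓘, and with t*(s), k*(s) the minimizers under p* and the sequences defined by b_0 = 1, v_i = b_i − t*(b_i), k_i = k*(b_i), b_{i+1} = (b_i − v_i)/k_i, the triple (p*, {v_i}, {k_i}) is an equilibrium for the production network: (i) p*(0) = 0; (ii) p*(s) − c(s − t) − g(k) − (1+τ)·k·p*(t/k) ≤ 0 for all 0 ≤ t ≤ s ≤ 1 and all integers k ≥ 1; and (iii) π_i := p*(b_i) − c(v_i) − g(k_i) − (1+τ)·k_i·p*((b_i − v_i)/k_i) = 0 for all i ≥ 0. -/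

import Mathlib

open Set Filter

/-- The set of attainable values at stage `s` for a firm facing price function `p`,
choosing an upstream boundary `t ∈ [0, s]` and a number `k ≥ 1` of suppliers:
`c(s − t) + g(k) + (1+τ)·k·p(t/k)`. -/
def networkChoices (τ : ℝ) (c : ℝ → ℝ) (g : ℕ → ℝ) (p : ℝ → ℝ) (s : ℝ) : Set ℝ :=
  {v | ∃ t ∈ Set.Icc 0 s, ∃ k : ℕ, 1 ≤ k ∧
    v = c (s - t) + g k + (1 + τ) * (k : ℝ) * p (t / (k : ℝ))}

/-- The candidate class 𝓘 for the production network: continuous `p` on `[0,1]` with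
`c'(0)·s ≤ p(s) ≤ c(s)`. -/
def networkClass (c cd : ℝ → ℝ) : Set (ℝ → ℝ) :=
  {p | ContinuousOn p (Set.Icc 0 1) ∧
    ∀ s ∈ Set.Icc (0 : ℝ) 1, cd 0 * s ≤ p s ∧ p s ≤ c s}

/-- Context bundling all standing assumptions and derived constants. -/
structure NetCtx where
  τ : ℝ
  c : ℝ → ℝ
  cd0 : ℝ
  g : ℕ → ℝ
  L : ℝ
  K : ℕ
  htau : 0 < τ
  hcont : ContinuousOn c (Set.Icc 0 1)
  hmono : MonotoneOn c (Set.Icc 0 1)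
  hczero : c 0 = 0
  hcd0 : 0 < cd0
  tangent : ∀ x ∈ Set.Icc (0:ℝ) 1, cd0 * x ≤ c x
  scale : ∀ u x : ℝ, 0 ≤ x → x ≤ u → u ≤ 1 → 0 < u → c x ≤ x / u * c u
  gpos : ∀ k : ℕ, 1 ≤ k → 0 ≤ g k
  hL : 0 ≤ L
  hLip : ∀ x ∈ Set.Icc (0:ℝ) 1, ∀ y ∈ Set.Icc (0:ℝ) 1, |c x - c y| ≤ L * |x - y|
  hg1 : g 1 = 0
  hK : 1 ≤ K
  hslope : Filter.Tendsto (fun u => c u / u) (nhdsWithin 0 (Set.Ioi 0)) (nhds cd0)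
  hgK : ∀ k : ℕ, K ≤ k → c 1 < g k

namespace NetCtx

variable (H : NetCtx)

/-- Bellman operator. -/
noncomputable def T (p : ℝ → ℝ) (s : ℝ) : ℝ := sInf (networkChoices H.τ H.c H.g p s)

/-- bounds predicate -/
def Bdd (p : ℝ → ℝ) : Prop := ∀ x ∈ Set.Icc (0:ℝ) 1, H.cd0 * x ≤ p x ∧ p x ≤ H.c x

lemma cnonneg : ∀ x ∈ Set.Icc (0:ℝ) 1, 0 ≤ H.c x := fun x hx =>
  le_trans (by nlinarith [H.hcd0, hx.1] : (0:ℝ) ≤ H.cd0 * x) (H.tangent x hx)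

lemma c1pos : 0 < H.c 1 :=
  lt_of_lt_of_le (by linarith [H.hcd0]) (by simpa using H.tangent 1 (by norm_num))

end NetCtx
lemma mem_aux {s t : ℝ} {k : ℕ} (hs : s ∈ Set.Icc (0:ℝ) 1) (ht : t ∈ Set.Icc 0 s)
    (hk : 1 ≤ k) :
    s - t ∈ Set.Icc (0:ℝ) 1 ∧ t / (k:ℝ) ∈ Set.Icc (0:ℝ) 1 ∧ t / (k:ℝ) ≤ t := by
  have hk1 : (1:ℝ) ≤ (k:ℝ) := by exact_mod_cast hk
  have hk0 : (0:ℝ) < (k:ℝ) := by linarith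
  have h1 : t / (k:ℝ) ≤ t := by
    rw [div_le_iff₀ hk0]; nlinarith [ht.1]
  have h2 : 0 ≤ t / (k:ℝ) := div_nonneg ht.1 (le_of_lt hk0)
  refine ⟨⟨by linarith [ht.2], by linarith [ht.1, hs.2]⟩, ⟨h2, ?_⟩, h1⟩
  linarith [ht.2, hs.2]

namespace NetCtx
variable (H : NetCtx)
lemma pzero {p : ℝ → ℝ} (hp : H.Bdd p) : p 0 = 0 := by
  have h := hp 0 (by norm_num)
  rw [H.hczero] at h; simp at h; linarith [h.1, h.2]

lemma c_mem_choices {p : ℝ → ℝ} {s : ℝ} (hp : H.Bdd p) (hs : s ∈ Set.Icc (0:ℝ) 1) :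
    H.c s ∈ networkChoices H.τ H.c H.g p s := by
  refine ⟨0, ⟨le_refl _, hs.1⟩, 1, le_refl _, ?_⟩
  simp [H.pzero hp, H.hg1, H.hczero]

lemma choices_lb {p : ℝ → ℝ} {s : ℝ} (hp : H.Bdd p) (hs : s ∈ Set.Icc (0:ℝ) 1) :
    ∀ v ∈ networkChoices H.τ H.c H.g p s, H.cd0 * s ≤ v := by
  rintro v ⟨t, ht, k, hk, rfl⟩
  obtain ⟨hst, htk, _⟩ := mem_aux hs ht hk
  have hk0 : (0:ℝ) < (k:ℝ) := by exact_mod_cast Nat.pos_of_ne_zero (by omega)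
  have h1 : H.cd0 * (s - t) ≤ H.c (s - t) := H.tangent _ hst
  have h2 : H.cd0 * (t / (k:ℝ)) ≤ p (t / (k:ℝ)) := (hp _ htk).1
  have h3 : 0 ≤ H.g k := H.gpos k hk
  have hkt : (k:ℝ) * (t / (k:ℝ)) = t := by field_simp
  have h5 : H.cd0 * t ≤ (k:ℝ) * p (t / (k:ℝ)) := by
    have e : (k:ℝ) * (H.cd0 * (t / (k:ℝ))) = H.cd0 * t := by
      rw [mul_left_comm, hkt]
    have := mul_le_mul_of_nonneg_left h2 (le_of_lt hk0)
    linarith [this, e.symm.le, e.le]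
  have h6 : 0 ≤ p (t / (k:ℝ)) := le_trans (by nlinarith [H.hcd0, htk.1]) h2
  have h4 : H.cd0 * t ≤ (1 + H.τ) * (k:ℝ) * p (t / (k:ℝ)) := by
    nlinarith [H.htau, mul_nonneg (le_of_lt hk0) h6]
  linarith

lemma choices_bddBelow {p : ℝ → ℝ} {s : ℝ} (hp : H.Bdd p) (hs : s ∈ Set.Icc (0:ℝ) 1) :
    BddBelow (networkChoices H.τ H.c H.g p s) :=
  ⟨H.cd0 * s, fun v hv => H.choices_lb hp hs v hv⟩

lemma T_le_c {p : ℝ → ℝ} {s : ℝ} (hp : H.Bdd p) (hs : s ∈ Set.Icc (0:ℝ) 1) :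
    H.T p s ≤ H.c s :=
  csInf_le (H.choices_bddBelow hp hs) (H.c_mem_choices hp hs)

lemma le_T {p : ℝ → ℝ} {s : ℝ} (hp : H.Bdd p) (hs : s ∈ Set.Icc (0:ℝ) 1) :
    H.cd0 * s ≤ H.T p s :=
  le_csInf ⟨_, H.c_mem_choices hp hs⟩ (H.choices_lb hp hs)

lemma T_bdd {p : ℝ → ℝ} (hp : H.Bdd p) : H.Bdd (H.T p) :=
  fun x hx => ⟨H.le_T hp hx, H.T_le_c hp hx⟩

end NetCtx

lemma attains {p : ℝ → ℝ} {s : ℝ} (H : NetCtx) (hp : H.Bdd p)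
    (hpc : ContinuousOn p (Set.Icc 0 1)) (hs : s ∈ Set.Icc (0:ℝ) 1) :
    IsLeast (networkChoices H.τ H.c H.g p s) (H.T p s) := by
  suffices h : ∃ v, IsLeast (networkChoices H.τ H.c H.g p s) v by
    obtain ⟨v, hv⟩ := h
    have : sInf (networkChoices H.τ H.c H.g p s) = v := hv.csInf_eq
    rw [NetCtx.T, this]; exact hv
  set val : ℕ → ℝ → ℝ := fun k t => H.c (s - t) + H.g k + (1 + H.τ) * (k:ℝ) * p (t / (k:ℝ)) with hval
  have hcontk : ∀ k : ℕ, 1 ≤ k → ContinuousOn (val k) (Set.Icc 0 s) := by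
    intro k hk
    have m1 : MapsTo (fun t => s - t) (Set.Icc 0 s) (Set.Icc (0:ℝ) 1) := by
      intro t ht; exact (mem_aux hs ht hk).1
    have m2 : MapsTo (fun t => t / (k:ℝ)) (Set.Icc 0 s) (Set.Icc (0:ℝ) 1) := by
      intro t ht; exact (mem_aux hs ht hk).2.1
    have c1 : ContinuousOn (fun t => H.c (s - t)) (Set.Icc 0 s) :=
      H.hcont.comp ((continuous_const.sub continuous_id).continuousOn) m1
    have c2 : ContinuousOn (fun t => p (t / (k:ℝ))) (Set.Icc 0 s) :=
      hpc.comp ((continuous_id.div_const _).continuousOn) m2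
    exact (c1.add continuousOn_const).add (continuousOn_const.mul c2)
  have hne : (Set.Icc (0:ℝ) s).Nonempty := ⟨0, le_refl _, hs.1⟩
  have hmin : ∀ k : ℕ, 1 ≤ k → ∃ t, t ∈ Set.Icc 0 s ∧ IsMinOn (val k) (Set.Icc 0 s) t := by
    intro k hk
    obtain ⟨t, ht, hmin⟩ := isCompact_Icc.exists_isMinOn hne (hcontk k hk)
    exact ⟨t, ht, hmin⟩
  choose! tm htm hismin using hmin
  obtain ⟨k0, hk0mem, hk0min⟩ := Finset.exists_min_image (Finset.Icc 1 H.K)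
    (fun k => val k (tm k)) ⟨1, Finset.mem_Icc.mpr ⟨le_refl _, H.hK⟩⟩
  obtain ⟨hk01, hk0K⟩ := Finset.mem_Icc.mp hk0mem
  refine ⟨val k0 (tm k0), ⟨tm k0, htm k0 hk01, k0, hk01, rfl⟩, ?_⟩
  have hvc : val k0 (tm k0) ≤ H.c s := by
    have h1 : val k0 (tm k0) ≤ val 1 (tm 1) :=
      hk0min 1 (Finset.mem_Icc.mpr ⟨le_refl _, H.hK⟩)
    have h2 : val 1 (tm 1) ≤ val 1 0 := hismin 1 (le_refl _) ⟨le_refl _, hs.1⟩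
    have h3 : val 1 0 = H.c s := by
      simp [hval, H.pzero hp, H.hg1]
    linarith
  rintro w ⟨t, ht, k, hk, rfl⟩
  by_cases hkK : k ≤ H.K
  · have h1 : val k0 (tm k0) ≤ val k (tm k) := hk0min k (Finset.mem_Icc.mpr ⟨hk, hkK⟩)
    have h2 : val k (tm k) ≤ val k t := hismin k hk ht
    exact le_trans h1 h2
  · have hg : H.c 1 < H.g k := H.hgK k (by omega)
    obtain ⟨hst, htk, _⟩ := mem_aux hs ht hk
    have hk0' : (0:ℝ) < (k:ℝ) := by exact_mod_cast Nat.pos_of_ne_zero (by omega)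
    have h1 : 0 ≤ H.c (s - t) := H.cnonneg _ hst
    have h2 : 0 ≤ p (t / (k:ℝ)) :=
      le_trans (by nlinarith [H.hcd0, htk.1]) (hp _ htk).1
    have h3 : 0 ≤ (1 + H.τ) * (k:ℝ) * p (t / (k:ℝ)) := by
      apply mul_nonneg (by nlinarith [H.htau]) h2
    have h4 : H.c s ≤ H.c 1 := H.hmono hs (by norm_num) hs.2
    have h5 : val k0 (tm k0) < H.g k := lt_of_le_of_lt (le_trans hvc h4) hg
    clear_value val
    linarith [h5, h1, h3]

lemma choices_congr {τ : ℝ} {c : ℝ → ℝ} {g : ℕ → ℝ} {p q : ℝ → ℝ} {s : ℝ}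
    (hs : s ∈ Set.Icc (0:ℝ) 1) (hpq : ∀ x ∈ Set.Icc (0:ℝ) 1, p x = q x) :
    networkChoices τ c g p s = networkChoices τ c g q s := by
  ext v
  constructor <;> rintro ⟨t, ht, k, hk, rfl⟩ <;> refine ⟨t, ht, k, hk, ?_⟩
  · rw [hpq _ (mem_aux hs ht hk).2.1]
  · rw [hpq _ (mem_aux hs ht hk).2.1]

lemma T_congr {p q : ℝ → ℝ} {s : ℝ} (H : NetCtx)
    (hs : s ∈ Set.Icc (0:ℝ) 1) (hpq : ∀ x ∈ Set.Icc (0:ℝ) 1, p x = q x) :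
    H.T p s = H.T q s := by
  unfold NetCtx.T; rw [choices_congr hs hpq]

lemma Bdd_congr {p q : ℝ → ℝ} (H : NetCtx) (hp : H.Bdd p)
    (hpq : ∀ x ∈ Set.Icc (0:ℝ) 1, p x = q x) : H.Bdd q := by
  intro x hx; rw [← hpq x hx]; exact hp x hx

lemma T_lip {p : ℝ → ℝ} {L' : ℝ} (H : NetCtx) (hp : H.Bdd p)
    (hpc : ContinuousOn p (Set.Icc 0 1)) (hL' : 0 ≤ L')
    (hplip : ∀ x ∈ Set.Icc (0:ℝ) 1, ∀ y ∈ Set.Icc (0:ℝ) 1, |p x - p y| ≤ L' * |x - y|) :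
    ∀ x ∈ Set.Icc (0:ℝ) 1, ∀ y ∈ Set.Icc (0:ℝ) 1,
      |H.T p x - H.T p y| ≤ (max H.L ((1 + H.τ) * L')) * |x - y| := by
  set M := max H.L ((1 + H.τ) * L') with hM
  have hM0 : 0 ≤ M := le_trans H.hL (le_max_left _ _)
  have hML : H.L ≤ M := le_max_left _ _
  have hMt : (1 + H.τ) * L' ≤ M := le_max_right _ _
  clear_value M
  have key : ∀ s ∈ Set.Icc (0:ℝ) 1, ∀ s' ∈ Set.Icc (0:ℝ) 1, s ≤ s' →
      |H.T p s' - H.T p s| ≤ M * (s' - s) := by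
    intro s hs s' hs' hss'
    rw [abs_sub_le_iff]
    constructor
    · -- T p s' - T p s ≤ M (s'-s)
      obtain ⟨⟨t, ht, k, hk, heq⟩, _⟩ := attains H hp hpc hs
      have hmem : H.c (s' - t) + H.g k + (1 + H.τ) * (k:ℝ) * p (t / (k:ℝ))
          ∈ networkChoices H.τ H.c H.g p s' :=
        ⟨t, ⟨ht.1, le_trans ht.2 hss'⟩, k, hk, rfl⟩
      have h1 : H.T p s' ≤ H.c (s' - t) + H.g k + (1 + H.τ) * (k:ℝ) * p (t / (k:ℝ)) :=
        csInf_le (H.choices_bddBelow hp hs') hmem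
      have h2 : |H.c (s' - t) - H.c (s - t)| ≤ H.L * |(s' - t) - (s - t)| :=
        H.hLip _ (mem_aux hs' ⟨ht.1, le_trans ht.2 hss'⟩ hk).1 _ (mem_aux hs ht hk).1
      have h3 : |(s' - t) - (s - t)| = s' - s := by rw [abs_of_nonneg] <;> ring_nf <;> linarith
      rw [h3] at h2
      have h4 := abs_le.mp h2
      have := mul_le_mul_of_nonneg_right hML (by linarith : (0:ℝ) ≤ s' - s)
      rw [heq]; linarith [h4.2]
    · -- T p s - T p s' ≤ M (s'-s)
      obtain ⟨⟨t', ht', k', hk', heq'⟩, _⟩ := attains H hp hpc hs'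
      rcases le_or_gt t' s with hts | hts
      · have hmem : H.c (s - t') + H.g k' + (1 + H.τ) * (k':ℝ) * p (t' / (k':ℝ))
            ∈ networkChoices H.τ H.c H.g p s := ⟨t', ⟨ht'.1, hts⟩, k', hk', rfl⟩
        have h1 : H.T p s ≤ _ := csInf_le (H.choices_bddBelow hp hs) hmem
        have h2 : H.c (s - t') ≤ H.c (s' - t') :=
          H.hmono (mem_aux hs ⟨ht'.1, hts⟩ hk').1 (mem_aux hs' ht' hk').1 (by linarith)
        rw [heq']
        nlinarith [mul_nonneg hM0 (by linarith : (0:ℝ) ≤ s' - s)]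
      · have hsmem : s ∈ Set.Icc 0 s := ⟨hs.1, le_refl _⟩
        have hmem : H.c (s - s) + H.g k' + (1 + H.τ) * (k':ℝ) * p (s / (k':ℝ))
            ∈ networkChoices H.τ H.c H.g p s := ⟨s, hsmem, k', hk', rfl⟩
        have h1 : H.T p s ≤ _ := csInf_le (H.choices_bddBelow hp hs) hmem
        have hk0' : (0:ℝ) < (k':ℝ) := by exact_mod_cast Nat.pos_of_ne_zero (by omega)
        have h2 : |p (s / (k':ℝ)) - p (t' / (k':ℝ))| ≤ L' * |s / (k':ℝ) - t' / (k':ℝ)| :=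
          hplip _ (mem_aux hs hsmem hk').2.1 _ (mem_aux hs' ht' hk').2.1
        have h3 : |s / (k':ℝ) - t' / (k':ℝ)| = (t' - s) / (k':ℝ) := by
          rw [div_sub_div_same, abs_div, abs_sub_comm,
            abs_of_nonneg (by linarith : (0:ℝ) ≤ t' - s), abs_of_pos hk0']
        rw [h3] at h2
        have h4 := (abs_le.mp h2).2
        -- p (s/k') - p (t'/k') ≤ L' * ((t'-s)/k')
        have h5 : (1 + H.τ) * (k':ℝ) * (p (s / (k':ℝ)) - p (t' / (k':ℝ)))
            ≤ (1 + H.τ) * L' * (t' - s) := by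
          have e : (1 + H.τ) * (k':ℝ) * (L' * ((t' - s) / (k':ℝ))) = (1 + H.τ) * L' * (t' - s) := by
            field_simp
          have := mul_le_mul_of_nonneg_left h4 (by nlinarith [H.htau, hk0'] : (0:ℝ) ≤ (1 + H.τ) * (k':ℝ))
          calc (1 + H.τ) * (k':ℝ) * (p (s / (k':ℝ)) - p (t' / (k':ℝ)))
              ≤ (1 + H.τ) * (k':ℝ) * (L' * ((t' - s) / (k':ℝ))) := this
            _ = (1 + H.τ) * L' * (t' - s) := e
        have h6 : 0 ≤ H.c (s' - t') := H.cnonneg _ (mem_aux hs' ht' hk').1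
        have h7 : H.c (s - s) = 0 := by rw [sub_self, H.hczero]
        have h8 : (1 + H.τ) * L' * (t' - s) ≤ (1 + H.τ) * L' * (s' - s) := by
          apply mul_le_mul_of_nonneg_left (by linarith [ht'.2]) (by nlinarith [H.htau])
        have h9 : (1 + H.τ) * L' * (s' - s) ≤ M * (s' - s) :=
          mul_le_mul_of_nonneg_right hMt (by linarith)
        rw [heq']
        nlinarith [h1, h5, h6, h7, h8, h9]
  intro x hx y hy
  rcases le_total x y with h | h
  · have hk2 := key x hx y hy h
    rw [abs_sub_comm] at hk2
    rw [abs_sub_comm x y, abs_of_nonneg (by linarith : (0:ℝ) ≤ y - x)]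
    exact hk2
  · rw [abs_of_nonneg (by linarith : (0:ℝ) ≤ x - y)]
    exact key y hy x hx h

namespace NetCtx
variable (H : NetCtx)

lemma T_dist {p q : ℝ → ℝ} {d s : ℝ} (hp : H.Bdd p) (hq : H.Bdd q)
    (hqc : ContinuousOn q (Set.Icc 0 1)) (hd : 0 ≤ d)
    (hpq : ∀ x ∈ Set.Icc (0:ℝ) 1, |p x - q x| ≤ d) (hs : s ∈ Set.Icc (0:ℝ) 1) :
    H.T p s - H.T q s ≤ (1 + H.τ) * (H.K : ℝ) * d := by
  obtain ⟨⟨t, ht, k, hk, heq⟩, _⟩ := attains H hq hqc hs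
  obtain ⟨hst, htk, _⟩ := mem_aux hs ht hk
  have hk0 : (0:ℝ) < (k:ℝ) := by exact_mod_cast Nat.pos_of_ne_zero (by omega)
  have hq0 : 0 ≤ q (t / (k:ℝ)) := le_trans (by nlinarith [H.hcd0, htk.1]) (hq _ htk).1
  have hkK : k ≤ H.K := by
    by_contra hcon
    have hg : H.c 1 < H.g k := H.hgK k (by omega)
    have h1 : 0 ≤ H.c (s - t) := H.cnonneg _ hst
    have h2 : 0 ≤ (1 + H.τ) * (k:ℝ) * q (t / (k:ℝ)) :=
      mul_nonneg (by nlinarith [H.htau]) hq0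
    have h3 : H.T q s ≤ H.c s := H.T_le_c hq hs
    have h4 : H.c s ≤ H.c 1 := H.hmono hs (by norm_num) hs.2
    linarith [heq.ge, heq.le]
  have h5 : H.T p s ≤ H.c (s - t) + H.g k + (1 + H.τ) * (k:ℝ) * p (t / (k:ℝ)) :=
    csInf_le (H.choices_bddBelow hp hs) ⟨t, ht, k, hk, rfl⟩
  have h6 : p (t / (k:ℝ)) - q (t / (k:ℝ)) ≤ d := (abs_le.mp (hpq _ htk)).2
  have h7 : (1 + H.τ) * (k:ℝ) * (p (t / (k:ℝ)) - q (t / (k:ℝ)))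
      ≤ (1 + H.τ) * (k:ℝ) * d := by
    apply mul_le_mul_of_nonneg_left h6 (by nlinarith [H.htau])
  have h8 : (1 + H.τ) * (k:ℝ) * d ≤ (1 + H.τ) * (H.K:ℝ) * d := by
    have hkc : (k:ℝ) ≤ (H.K:ℝ) := by exact_mod_cast hkK
    apply mul_le_mul_of_nonneg_right _ hd
    apply mul_le_mul_of_nonneg_left hkc (by linarith [H.htau])
  nlinarith [heq.le, heq.ge]

/-- Iterates of `T` stay bounded and continuous. -/
def Good (p : ℝ → ℝ) : Prop :=
  ∀ m : ℕ, H.Bdd (H.T^[m] p) ∧ ContinuousOn (H.T^[m] p) (Set.Icc 0 1)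

lemma claim : ∀ n : ℕ, ∀ p q : ℝ → ℝ, H.Good p → H.Good q →
    ∀ s ∈ Set.Icc (0:ℝ) 1, ∃ P x : ℝ,
      (1 + H.τ)^n ≤ P ∧ x ∈ Set.Icc (0:ℝ) 1 ∧ P * (H.cd0 * x) ≤ H.T^[n] q s ∧
      H.T^[n] p s - H.T^[n] q s ≤ P * (H.c x - H.cd0 * x) := by
  intro n
  induction n with
  | zero =>
    intro p q hp hq s hs
    refine ⟨1, s, by norm_num, hs, ?_, ?_⟩
    · simpa using ((hq 0).1 s hs).1
    · have h1 := ((hp 0).1 s hs).2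
      have h2 := ((hq 0).1 s hs).1
      simp only [Function.iterate_zero, id] at h1 h2 ⊢
      linarith
  | succ n ih =>
    intro p q hp hq s hs
    obtain ⟨⟨t, ht, k, hk, heq⟩, _⟩ := attains H (hq n).1 (hq n).2 hs
    obtain ⟨hst, htk, _⟩ := mem_aux hs ht hk
    have hk0 : (0:ℝ) < (k:ℝ) := by exact_mod_cast Nat.pos_of_ne_zero (by omega)
    obtain ⟨P', x, hP', hx, hbud, hdiff⟩ := ih p q hp hq (t / (k:ℝ)) htk
    have hiterq : H.T^[n+1] q s = H.T (H.T^[n] q) s := by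
      rw [Function.iterate_succ_apply']
    have hiterp : H.T^[n+1] p s = H.T (H.T^[n] p) s := by
      rw [Function.iterate_succ_apply']
    have hPpos : 0 < P' := lt_of_lt_of_le (pow_pos (by linarith [H.htau]) n) hP'
    refine ⟨(1 + H.τ) * (k:ℝ) * P', x, ?_, hx, ?_, ?_⟩
    · have hk1 : (1:ℝ) ≤ (k:ℝ) := by exact_mod_cast hk
      rw [pow_succ]
      nlinarith [H.htau, hP', hPpos, mul_nonneg (sub_nonneg.mpr hk1) hPpos.le]
    · have h1 : (1 + H.τ) * (k:ℝ) * P' * (H.cd0 * x)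
          = (1 + H.τ) * (k:ℝ) * (P' * (H.cd0 * x)) := by ring
      have h2 : (1 + H.τ) * (k:ℝ) * (P' * (H.cd0 * x))
          ≤ (1 + H.τ) * (k:ℝ) * (H.T^[n] q (t / (k:ℝ))) := by
        apply mul_le_mul_of_nonneg_left hbud (by nlinarith [H.htau])
      have h3 : 0 ≤ H.c (s - t) := H.cnonneg _ hst
      have h4 : 0 ≤ H.g k := H.gpos k hk
      rw [hiterq, heq, h1]; linarith
    · have h5 : H.T^[n+1] p s
          ≤ H.c (s - t) + H.g k + (1 + H.τ) * (k:ℝ) * (H.T^[n] p (t / (k:ℝ))) := by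
        rw [hiterp]
        exact csInf_le (H.choices_bddBelow (hp n).1 hs) ⟨t, ht, k, hk, rfl⟩
      have h6 : (1 + H.τ) * (k:ℝ) * (H.T^[n] p (t / (k:ℝ)) - H.T^[n] q (t / (k:ℝ)))
          ≤ (1 + H.τ) * (k:ℝ) * (P' * (H.c x - H.cd0 * x)) := by
        apply mul_le_mul_of_nonneg_left hdiff (by nlinarith [H.htau])
      have h7 : (1 + H.τ) * (k:ℝ) * (P' * (H.c x - H.cd0 * x))
          = (1 + H.τ) * (k:ℝ) * P' * (H.c x - H.cd0 * x) := by ring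
      rw [hiterq, heq]
      linarith [h5, h6, h7.le, h7.ge]

end NetCtx

namespace NetCtx
variable (H : NetCtx)

noncomputable def useq (n : ℕ) : ℝ := min 1 (H.c 1 / (H.cd0 * (1 + H.τ)^n))

noncomputable def Dl (n : ℕ) : ℝ :=
  (H.c 1 / H.cd0) * ((H.c (H.useq n) - H.cd0 * H.useq n) / H.useq n)

lemma u_pos (n : ℕ) : 0 < H.useq n := by
  apply lt_min one_pos
  apply div_pos H.c1pos
  exact mul_pos H.hcd0 (pow_pos (by linarith [H.htau]) n)

lemma u_mem (n : ℕ) : H.useq n ∈ Set.Icc (0:ℝ) 1 :=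
  ⟨(H.u_pos n).le, min_le_left _ _⟩

lemma absdiff_le {p q : ℝ → ℝ} (hp : H.Good p) (hq : H.Good q) (n : ℕ)
    {s : ℝ} (hs : s ∈ Set.Icc (0:ℝ) 1) :
    |H.T^[n] p s - H.T^[n] q s| ≤ H.Dl n := by
  have key : ∀ p' q' : ℝ → ℝ, H.Good p' → H.Good q' →
      H.T^[n] p' s - H.T^[n] q' s ≤ H.Dl n := by
    intro p' q' hp' hq'
    obtain ⟨P, x, hP, hx, hbud, hdiff⟩ := H.claim n p' q' hp' hq' s hs
    set u := H.useq n with hu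
    have hu0 : 0 < u := H.u_pos n
    have hu1 : u ≤ 1 := min_le_left _ _
    have hPow : (0:ℝ) < (1 + H.τ)^n := pow_pos (by linarith [H.htau]) n
    have hP0 : 0 < P := lt_of_lt_of_le hPow hP
    have hTq : H.T^[n] q' s ≤ H.c s := ((hq' n).1 s hs).2
    have hcs1 : H.c s ≤ H.c 1 := H.hmono hs (by norm_num) hs.2
    have hbud1 : P * (H.cd0 * x) ≤ H.c 1 := le_trans hbud (le_trans hTq hcs1)
    -- x ≤ u
    have hxu : x ≤ u := by
      apply le_min hx.2
      rw [le_div_iff₀ (mul_pos H.hcd0 hPow)]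
      calc x * (H.cd0 * (1 + H.τ)^n) = (1 + H.τ)^n * (H.cd0 * x) := by ring
        _ ≤ P * (H.cd0 * x) := by
            apply mul_le_mul_of_nonneg_right hP (by nlinarith [H.hcd0, hx.1])
        _ ≤ H.c 1 := hbud1
    -- φ x ≤ (x/u) φ u
    have hscale : H.c x ≤ x / u * H.c u := by
      rcases eq_or_lt_of_le hx.1 with h0 | h0
      · rw [← h0, H.hczero]
        have : 0 ≤ (0:ℝ) / u * H.c u := by
          rw [zero_div, zero_mul]
        linarith
      · exact H.scale u x hx.1 hxu hu1 hu0
    have hxu_mul : x / u * u = x := by field_simp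
    have hphix : H.c x - H.cd0 * x ≤ (x / u) * (H.c u - H.cd0 * u) := by
      have : (x / u) * (H.c u - H.cd0 * u) = x / u * H.c u - H.cd0 * (x / u * u) := by ring
      rw [this, hxu_mul]; linarith
    have hphiu : 0 ≤ H.c u - H.cd0 * u := by
      have := H.tangent u (H.u_mem n); linarith
    have hPx : P * x ≤ H.c 1 / H.cd0 := by
      rw [le_div_iff₀ H.hcd0]
      calc P * x * H.cd0 = P * (H.cd0 * x) := by ring
        _ ≤ H.c 1 := hbud1
    calc H.T^[n] p' s - H.T^[n] q' s ≤ P * (H.c x - H.cd0 * x) := hdiff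
      _ ≤ P * ((x / u) * (H.c u - H.cd0 * u)) := by
          apply mul_le_mul_of_nonneg_left hphix hP0.le
      _ = (P * x) * ((H.c u - H.cd0 * u) / u) := by field_simp
      _ ≤ (H.c 1 / H.cd0) * ((H.c u - H.cd0 * u) / u) := by
          apply mul_le_mul_of_nonneg_right hPx (div_nonneg hphiu hu0.le)
      _ = H.Dl n := rfl
  rw [abs_sub_le_iff]
  exact ⟨key p q hp hq, key q p hq hp⟩

lemma Dl_nonneg (n : ℕ) : 0 ≤ H.Dl n := by
  apply mul_nonneg (div_nonneg H.c1pos.le H.hcd0.le)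
  apply div_nonneg _ (H.u_pos n).le
  have := H.tangent _ (H.u_mem n); linarith

lemma Dl_tendsto : Filter.Tendsto H.Dl Filter.atTop (nhds 0) := by
  have h1 : Filter.Tendsto (fun n : ℕ => H.c 1 / (H.cd0 * (1 + H.τ)^n))
      Filter.atTop (nhds 0) := by
    apply Filter.Tendsto.div_atTop tendsto_const_nhds
    apply Filter.Tendsto.const_mul_atTop H.hcd0
    exact tendsto_pow_atTop_atTop_of_one_lt (by linarith [H.htau])
  have hu0 : Filter.Tendsto H.useq Filter.atTop (nhds 0) := by
    apply squeeze_zero (fun n => (H.u_pos n).le) (fun n => min_le_right _ _) h1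
  have huw : Filter.Tendsto H.useq Filter.atTop (nhdsWithin 0 (Set.Ioi 0)) := by
    apply tendsto_nhdsWithin_of_tendsto_nhds_of_eventually_within _ hu0
    exact Filter.Eventually.of_forall (fun n => H.u_pos n)
  have hcomp : Filter.Tendsto (fun n => H.c (H.useq n) / H.useq n)
      Filter.atTop (nhds H.cd0) := H.hslope.comp huw
  have heq : ∀ n, H.Dl n = (H.c 1 / H.cd0) * (H.c (H.useq n) / H.useq n - H.cd0) := by
    intro n
    have hne : H.useq n ≠ 0 := (H.u_pos n).ne'
    rw [Dl, sub_div, mul_div_assoc, div_self hne, mul_one]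
  rw [show (0:ℝ) = (H.c 1 / H.cd0) * (H.cd0 - H.cd0) by ring]
  apply Filter.Tendsto.congr (fun n => (heq n).symm)
  exact (Filter.Tendsto.sub_const hcomp H.cd0).const_mul _

end NetCtx

lemma contOn_of_lip {f : ℝ → ℝ} {L : ℝ} (hL : 0 ≤ L)
    (h : ∀ x ∈ Set.Icc (0:ℝ) 1, ∀ y ∈ Set.Icc (0:ℝ) 1, |f x - f y| ≤ L * |x - y|) :
    ContinuousOn f (Set.Icc 0 1) := by
  apply LipschitzOnWith.continuousOn (K := Real.toNNReal L)
  rw [lipschitzOnWith_iff_dist_le_mul]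
  intro x hx y hy
  rw [Real.dist_eq, Real.dist_eq, Real.coe_toNNReal L hL]
  exact h x hx y hy

namespace NetCtx
variable (H : NetCtx)

lemma good_of_fixed {p : ℝ → ℝ} (hb : H.Bdd p) (hc : ContinuousOn p (Set.Icc 0 1))
    (hfix : ∀ s ∈ Set.Icc (0:ℝ) 1, H.T p s = p s) :
    ∀ m : ℕ, (∀ s ∈ Set.Icc (0:ℝ) 1, H.T^[m] p s = p s) ∧
      H.Bdd (H.T^[m] p) ∧ ContinuousOn (H.T^[m] p) (Set.Icc 0 1) := by
  intro m
  induction m with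
  | zero => exact ⟨fun s _ => rfl, hb, hc⟩
  | succ n ih =>
    have heq : ∀ s ∈ Set.Icc (0:ℝ) 1, H.T^[n+1] p s = p s := by
      intro s hs
      rw [Function.iterate_succ_apply', T_congr H hs ih.1]
      exact hfix s hs
    exact ⟨heq, Bdd_congr H hb (fun x hx => (heq x hx).symm), hc.congr heq⟩

lemma good_of_fixed' {p : ℝ → ℝ} (hb : H.Bdd p) (hc : ContinuousOn p (Set.Icc 0 1))
    (hfix : ∀ s ∈ Set.Icc (0:ℝ) 1, H.T p s = p s) : H.Good p :=
  fun m => ⟨(H.good_of_fixed hb hc hfix m).2.1, (H.good_of_fixed hb hc hfix m).2.2⟩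

lemma goodc (hb : H.Bdd H.c) (hlipc : ∀ x ∈ Set.Icc (0:ℝ) 1, ∀ y ∈ Set.Icc (0:ℝ) 1,
    |H.c x - H.c y| ≤ H.L * |x - y|) : H.Good H.c := by
  have main : ∀ m : ℕ, H.Bdd (H.T^[m] H.c) ∧ ∃ L', 0 ≤ L' ∧
      ∀ x ∈ Set.Icc (0:ℝ) 1, ∀ y ∈ Set.Icc (0:ℝ) 1,
        |H.T^[m] H.c x - H.T^[m] H.c y| ≤ L' * |x - y| := by
    intro m
    induction m with
    | zero => exact ⟨hb, H.L, H.hL, hlipc⟩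
    | succ n ih =>
      obtain ⟨hbn, L', hL', hlip'⟩ := ih
      constructor
      · intro x hx
        rw [Function.iterate_succ_apply']
        exact ⟨H.le_T hbn hx, H.T_le_c hbn hx⟩
      · refine ⟨max H.L ((1 + H.τ) * L'), le_trans H.hL (le_max_left _ _), ?_⟩
        intro x hx y hy
        have h3 := T_lip H hbn (contOn_of_lip hL' hlip') hL' hlip' x hx y hy
        simpa [Function.iterate_succ_apply'] using h3
  intro m
  obtain ⟨h1, L', hL', h2⟩ := main m
  exact ⟨h1, contOn_of_lip hL' h2⟩

end NetCtx

/-- if `c'(0) > 0` and `g(k) → ∞`, the production-network Bellman equation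
has a unique solution `p*` in 𝓘, and with the minimizers `t*, k*` and the induced
boundaries `b_i`, allocations `v_i = b_i − t*(b_i)` and supplier numbers `k_i = k*(b_i)`,
the triple `(p*, {v_i}, {k_i})` is an equilibrium for the production network. -/
theorem production_network_equilibrium
    (c cd : ℝ → ℝ)
    (hderiv : ∀ x ∈ Set.Icc (0 : ℝ) 1, HasDerivAt c (cd x) x)
    (hcont_deriv : ContinuousOn cd (Set.Icc (0 : ℝ) 1))
    (hmono : MonotoneOn c (Set.Icc (0 : ℝ) 1))
    (hconv : StrictConvexOn ℝ (Set.Icc (0 : ℝ) 1) c)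
    (hczero : c 0 = 0)
    (hcd0 : 0 < cd 0)
    (g : ℕ → ℝ)
    (hg_mono : ∀ k l : ℕ, 1 ≤ k → k < l → g k < g l)
    (hg1 : g 1 = 0)
    (hg_infty : Tendsto g atTop atTop)
    (τ : ℝ) (hτ : 0 < τ) :
    ∃ pstar ∈ networkClass c cd,
      -- p* solves the Bellman equation (the min being attained) ...
      (∀ s ∈ Set.Icc (0 : ℝ) 1, IsLeast (networkChoices τ c g pstar s) (pstar s)) ∧
      -- ... and is the unique solution in 𝓘
      (∀ q ∈ networkClass c cd,
        (∀ s ∈ Set.Icc (0 : ℝ) 1, q s = sInf (networkChoices τ c g q s)) →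
        ∀ s ∈ Set.Icc (0 : ℝ) 1, q s = pstar s) ∧
      -- minimizer functions t*, k* inducing an equilibrium
      ∃ tstar : ℝ → ℝ, ∃ kstar : ℝ → ℕ,
        (∀ s ∈ Set.Icc (0 : ℝ) 1,
          tstar s ∈ Set.Icc 0 s ∧ 1 ≤ kstar s ∧
          pstar s = c (s - tstar s) + g (kstar s) +
            (1 + τ) * (kstar s : ℝ) * pstar (tstar s / (kstar s : ℝ))) ∧
        ∀ b : ℕ → ℝ,
          b 0 = 1 →
          (∀ i, b (i + 1) = tstar (b i) / (kstar (b i) : ℝ)) →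
          -- (i) the upstream-most price is zero
          pstar 0 = 0 ∧
          -- (ii) no entrant can make positive profits
          (∀ t s : ℝ, 0 ≤ t → t ≤ s → s ≤ 1 → ∀ k : ℕ, 1 ≤ k →
            pstar s - c (s - t) - g k - (1 + τ) * (k : ℝ) * pstar (t / (k : ℝ)) ≤ 0) ∧
          -- (iii) every active firm makes zero profits
          (∀ i : ℕ,
            pstar (b i) - c (b i - tstar (b i)) - g (kstar (b i)) -
              (1 + τ) * ((kstar (b i) : ℝ)) *
                pstar ((b i - (b i - tstar (b i))) / (kstar (b i) : ℝ)) = 0) := by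
    -- continuity of c
  have hcont_c : ContinuousOn c (Set.Icc 0 1) :=
    fun x hx => (hderiv x hx).continuousAt.continuousWithinAt
  -- convexity scaling
  have hscale : ∀ u x : ℝ, 0 ≤ x → x ≤ u → u ≤ 1 → 0 < u → c x ≤ x / u * c u := by
    intro u x hx0 hxu hu1 hu0
    have h0 : (0:ℝ) ∈ Set.Icc (0:ℝ) 1 := by norm_num
    have hu : u ∈ Set.Icc (0:ℝ) 1 := ⟨hu0.le, hu1⟩
    have ha : 0 ≤ 1 - x / u := by
      rw [sub_nonneg, div_le_one hu0]; exact hxu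
    have hbb : 0 ≤ x / u := div_nonneg hx0 hu0.le
    have hab : (1 - x / u) + x / u = 1 := by ring
    have hcc := hconv.convexOn.2 h0 hu ha hbb hab
    rw [hczero] at hcc
    simp only [smul_eq_mul, mul_zero, zero_add] at hcc
    have hxeq : x / u * u = x := by field_simp
    rw [hxeq] at hcc
    linarith
  -- slope limit at zero
  have hslope : Tendsto (fun u => c u / u) (nhdsWithin 0 (Set.Ioi 0)) (nhds (cd 0)) := by
    have h1 : HasDerivAt c (cd 0) 0 := hderiv 0 (by norm_num)
    have h2 := hasDerivAt_iff_tendsto_slope.mp h1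
    have h3 : Tendsto (slope c 0) (nhdsWithin 0 (Set.Ioi 0)) (nhds (cd 0)) :=
      h2.mono_left (nhdsWithin_mono 0 (fun u hu => ne_of_gt hu))
    apply h3.congr
    intro u
    rw [slope_def_field, hczero, sub_zero, sub_zero]
  -- tangent line
  have htangent : ∀ x ∈ Set.Icc (0:ℝ) 1, cd 0 * x ≤ c x := by
    intro x hx
    rcases eq_or_lt_of_le hx.1 with h0 | h0
    · simp [← h0, hczero]
    · have hev : ∀ᶠ u in nhdsWithin 0 (Set.Ioi 0), c u / u ≤ c x / x := by
        filter_upwards [Ioo_mem_nhdsGT_of_mem (Set.mem_Ico.mpr ⟨le_refl 0, h0⟩)] with u hu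
        have h1 : c u ≤ u / x * c x := hscale x u hu.1.le hu.2.le hx.2 h0
        rw [div_le_div_iff₀ hu.1 h0]
        have h1' : c u * x ≤ (u / x * c x) * x :=
          mul_le_mul_of_nonneg_right h1 (le_trans hu.1.le hu.2.le)
        have e : (u / x * c x) * x = u * c x := by field_simp
        linarith
      have h2 : cd 0 ≤ c x / x := le_of_tendsto hslope hev
      have e2 : (c x / x) * x = c x := by field_simp
      nlinarith [mul_le_mul_of_nonneg_right h2 hx.1]
  -- g nonneg
  have hgpos : ∀ k : ℕ, 1 ≤ k → 0 ≤ g k := by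
    intro k hk
    rcases eq_or_lt_of_le hk with h | h
    · rw [← h, hg1]
    · exact (le_of_lt (by rw [← hg1]; exact hg_mono 1 k (le_refl _) h))
  -- Lipschitz bound for c
  obtain ⟨B, hB⟩ := isCompact_Icc.exists_bound_of_continuousOn hcont_deriv
  have hB0 : 0 ≤ B := le_trans (norm_nonneg _) (hB 0 (by norm_num))
  have hlipc : ∀ x ∈ Set.Icc (0:ℝ) 1, ∀ y ∈ Set.Icc (0:ℝ) 1, |c x - c y| ≤ B * |x - y| := by
    have key : ∀ x ∈ Set.Icc (0:ℝ) 1, ∀ y ∈ Set.Icc (0:ℝ) 1, x < y →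
        |c x - c y| ≤ B * |x - y| := by
      intro x hx y hy hxy
      obtain ⟨ξ, hξ, hξeq⟩ := exists_hasDerivAt_eq_slope c cd hxy
        (hcont_c.mono (Set.Icc_subset_Icc hx.1 hy.2))
        (fun z hz => hderiv z ⟨le_trans hx.1 hz.1.le, le_trans hz.2.le hy.2⟩)
      have hξI : ξ ∈ Set.Icc (0:ℝ) 1 :=
        ⟨le_trans hx.1 hξ.1.le, le_trans hξ.2.le hy.2⟩
      have h1 : c y - c x = cd ξ * (y - x) := by
        rw [hξeq, div_mul_cancel₀ _ (sub_pos.mpr hxy).ne']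
      have h2 : |c x - c y| = |cd ξ| * |y - x| := by
        rw [abs_sub_comm, h1, abs_mul]
      rw [h2, abs_sub_comm x y]
      apply mul_le_mul_of_nonneg_right _ (abs_nonneg _)
      exact le_trans (le_abs_self _) (le_trans (le_refl _) (by simpa using hB ξ hξI))
    intro x hx y hy
    rcases lt_trichotomy x y with h | h | h
    · exact key x hx y hy h
    · simp [h]
    · rw [abs_sub_comm, abs_sub_comm x y]; exact key y hy x hx h
  -- cutoff for g
  obtain ⟨N, hN⟩ := Filter.eventually_atTop.mp (hg_infty.eventually_gt_atTop (c 1))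
  set H : NetCtx := {
    τ := τ, c := c, cd0 := cd 0, g := g, L := B, K := max N 1,
    htau := hτ, hcont := hcont_c, hmono := hmono, hczero := hczero,
    hcd0 := hcd0, tangent := htangent, scale := hscale, gpos := hgpos,
    hL := hB0, hLip := hlipc, hg1 := hg1, hK := le_max_right _ _,
    hslope := hslope,
    hgK := fun k hk => hN k (le_trans (le_max_left _ _) hk) } with hH
  -- c is in the bounds class
  have hBddc : H.Bdd c := fun x hx => ⟨htangent x hx, le_refl _⟩
  have hGoodc : H.Good c := H.goodc hBddc hlipc
  have hGoodIter : ∀ j : ℕ, H.Good (H.T^[j] c) := by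
    intro j m
    rw [← Function.iterate_add_apply]
    exact hGoodc (m + j)
  -- pointwise limits
  have hcauchy : ∀ s ∈ Set.Icc (0:ℝ) 1, ∃ l, Tendsto (fun n => H.T^[n] c s) atTop (nhds l) := by
    intro s hs
    apply cauchySeq_tendsto_of_complete
    rw [Metric.cauchySeq_iff']
    intro ε hε
    obtain ⟨M, hM⟩ := Filter.eventually_atTop.mp
      ((H.Dl_tendsto.eventually (gt_mem_nhds hε)))
    refine ⟨M, fun n hn => ?_⟩
    have h1 : H.T^[n] c s = H.T^[M] (H.T^[n - M] c) s := by
      rw [← Function.iterate_add_apply, Nat.add_sub_cancel' hn]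
    rw [Real.dist_eq, h1]
    calc |H.T^[M] (H.T^[n - M] c) s - H.T^[M] c s| ≤ H.Dl M :=
        H.absdiff_le (hGoodIter (n - M)) hGoodc M hs
      _ < ε := hM M (le_refl _)
  choose! pstar hpstar using hcauchy
  -- uniform error bound
  have hunif : ∀ n : ℕ, ∀ s ∈ Set.Icc (0:ℝ) 1, |pstar s - H.T^[n] c s| ≤ H.Dl n := by
    intro n s hs
    have h1 : ∀ j : ℕ, |H.T^[n] (H.T^[j] c) s - H.T^[n] c s| ≤ H.Dl n :=
      fun j => H.absdiff_le (hGoodIter j) hGoodc n hs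
    have h2 : Tendsto (fun j => |H.T^[n] (H.T^[j] c) s - H.T^[n] c s|) atTop
        (nhds (|pstar s - H.T^[n] c s|)) := by
      have h3 : Tendsto (fun j => H.T^[n + j] c s) atTop (nhds (pstar s)) := by
        have h4 : Tendsto (fun j : ℕ => n + j) atTop atTop := by
          apply tendsto_atTop_mono (fun j => Nat.le_add_left j n) tendsto_id
        exact (hpstar s hs).comp h4
      have h5 : Tendsto (fun j => H.T^[n] (H.T^[j] c) s) atTop (nhds (pstar s)) := by
        apply h3.congr
        intro j
        rw [Function.iterate_add_apply]
      exact (h5.sub_const _).abs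
    exact le_of_tendsto h2 (Filter.Eventually.of_forall h1)
  -- pstar is bounded
  have hBddstar : H.Bdd pstar := by
    intro x hx
    constructor
    · apply ge_of_tendsto (hpstar x hx)
      exact Filter.Eventually.of_forall (fun n => ((hGoodc n).1 x hx).1)
    · apply le_of_tendsto (hpstar x hx)
      exact Filter.Eventually.of_forall (fun n => ((hGoodc n).1 x hx).2)
  -- pstar is continuous
  have hcontstar : ContinuousOn pstar (Set.Icc 0 1) := by
    have huc : TendstoUniformlyOn (fun n s => H.T^[n] c s) pstar atTop (Set.Icc 0 1) := by
      rw [Metric.tendstoUniformlyOn_iff]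
      intro ε hε
      filter_upwards [H.Dl_tendsto.eventually (gt_mem_nhds (half_pos hε))] with n hn x hx
      rw [Real.dist_eq]
      calc |pstar x - H.T^[n] c x| ≤ H.Dl n := hunif n x hx
        _ < ε / 2 := hn
        _ < ε := by linarith
    exact huc.continuousOn (Filter.Eventually.of_forall (fun n => (hGoodc n).2)).frequently
  -- fixed point property
  have hfix : ∀ s ∈ Set.Icc (0:ℝ) 1, H.T pstar s = pstar s := by
    intro s hs
    have key : ∀ n : ℕ, |H.T pstar s - pstar s| ≤
        (1 + H.τ) * (H.K : ℝ) * H.Dl n + H.Dl (n + 1) := by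
      intro n
      have hd := H.Dl_nonneg n
      have h1 : H.T pstar s - H.T (H.T^[n] c) s ≤ (1 + H.τ) * (H.K : ℝ) * H.Dl n :=
        H.T_dist hBddstar (hGoodc n).1 (hGoodc n).2 hd
          (fun x hx => hunif n x hx) hs
      have h2 : H.T (H.T^[n] c) s - H.T pstar s ≤ (1 + H.τ) * (H.K : ℝ) * H.Dl n :=
        H.T_dist (hGoodc n).1 hBddstar hcontstar hd
          (fun x hx => by rw [abs_sub_comm]; exact hunif n x hx) hs
      have h3 : |H.T (H.T^[n] c) s - pstar s| ≤ H.Dl (n + 1) := by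
        rw [abs_sub_comm]
        have h5 := hunif (n + 1) s hs
        rwa [Function.iterate_succ_apply'] at h5
      have h4 := abs_le.mp h3
      rw [abs_le]
      constructor <;> nlinarith [h4.1, h4.2]
    have hlim : Tendsto (fun n => (1 + H.τ) * (H.K : ℝ) * H.Dl n + H.Dl (n + 1))
        atTop (nhds 0) := by
      have ha := H.Dl_tendsto.const_mul ((1 + H.τ) * (H.K : ℝ))
      have hb := H.Dl_tendsto.comp (tendsto_add_atTop_nat 1)
      have := ha.add hb
      simpa using this
    have h0 : H.T pstar s - pstar s = 0 :=
      abs_nonpos_iff.mp (ge_of_tendsto hlim (Filter.Eventually.of_forall key))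
    linarith
  -- assemble the answer
  have hGoodpstar : H.Good pstar := H.good_of_fixed' hBddstar hcontstar hfix
  refine ⟨pstar, ⟨hcontstar, fun s hs => hBddstar s hs⟩, ?_, ?_, ?_⟩
  · -- Bellman equation with attained minimum
    intro s hs
    have h := attains H hBddstar hcontstar hs
    rw [hfix s hs] at h
    exact h
  · -- uniqueness
    intro q hqmem hqBell s hs
    have hqBdd : H.Bdd q := fun x hx => hqmem.2 x hx
    have hfixq : ∀ s ∈ Set.Icc (0:ℝ) 1, H.T q s = q s :=
      fun s hs => (hqBell s hs).symm
    have hGoodq : H.Good q := H.good_of_fixed' hqBdd hqmem.1 hfixq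
    have key : ∀ n : ℕ, |q s - pstar s| ≤ H.Dl n := by
      intro n
      have h := H.absdiff_le hGoodq hGoodpstar n hs
      rwa [(H.good_of_fixed hqBdd hqmem.1 hfixq n).1 s hs,
        (H.good_of_fixed hBddstar hcontstar hfix n).1 s hs] at h
    have h0 : |q s - pstar s| ≤ 0 :=
      ge_of_tendsto H.Dl_tendsto (Filter.Eventually.of_forall key)
    have := abs_nonpos_iff.mp h0
    linarith [this.le, this.ge]
  · -- minimizers and equilibrium
    have hminattain : ∀ s, s ∈ Set.Icc (0:ℝ) 1 → ∃ t, t ∈ Set.Icc 0 s ∧ ∃ k : ℕ, 1 ≤ k ∧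
        pstar s = c (s - t) + g k + (1 + τ) * (k:ℝ) * pstar (t / (k:ℝ)) := by
      intro s hs
      obtain ⟨t, ht, k, hk, heq⟩ := (attains H hBddstar hcontstar hs).1
      refine ⟨t, ht, k, hk, ?_⟩
      rw [← hfix s hs]
      exact heq
    choose! tstar h1 h2 using hminattain
    choose! kstar h3 h4 using h2
    refine ⟨tstar, kstar, fun s hs => ⟨h1 s hs, h3 s hs, h4 s hs⟩, ?_⟩
    intro b hb0 hbrec
    have hbmem : ∀ i, b i ∈ Set.Icc (0:ℝ) 1 := by
      intro i
      induction i with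
      | zero => rw [hb0]; norm_num
      | succ n ih =>
        rw [hbrec n]
        have ht := h1 (b n) ih
        have hk := h3 (b n) ih
        have hk1 : (1:ℝ) ≤ (kstar (b n) : ℝ) := by exact_mod_cast hk
        have hk0 : (0:ℝ) < (kstar (b n) : ℝ) := by linarith
        constructor
        · exact div_nonneg ht.1 hk0.le
        · have hd : tstar (b n) / (kstar (b n) : ℝ) ≤ tstar (b n) := by
            rw [div_le_iff₀ hk0]; nlinarith [ht.1]
          linarith [ht.2, ih.2]
    refine ⟨?_, ?_, ?_⟩
    · -- pstar 0 = 0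
      have hb1 : cd 0 * 0 ≤ pstar 0 := (hBddstar 0 (by norm_num)).1
      have hb2 : pstar 0 ≤ c 0 := (hBddstar 0 (by norm_num)).2
      rw [hczero] at hb2
      rw [mul_zero] at hb1
      linarith
    · -- no entrant makes positive profits
      intro t s ht0 hts hs1 k hk
      have hsI : s ∈ Set.Icc (0:ℝ) 1 := ⟨le_trans ht0 hts, hs1⟩
      have hmem : c (s - t) + g k + (1 + τ) * (k:ℝ) * pstar (t / (k:ℝ))
          ∈ networkChoices τ c g pstar s := ⟨t, ⟨ht0, hts⟩, k, hk, rfl⟩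
      have hle := (attains H hBddstar hcontstar hsI).2 hmem
      rw [hfix s hsI] at hle
      linarith
    · -- active firms make zero profits
      intro i
      have e : b i - (b i - tstar (b i)) = tstar (b i) := by ring
      rw [e]
      have := h4 (b i) (hbmem i)
      linarith
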